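/- Suppose c ≠ 0 and let n₀ be the smallest index n with c_n ≠ 0. Let M : [0,∞) → ℝ satisfy M(t)/t → 0 as t → ∞. Define u(t) = Σ_{n≥1} exp(−λ_n t + ∫_0^t [α(r(s)) − (1/2) Σ_{j=1}^m β_j(r(s))²] ds + M(t)) c_n e_n for t ≥ 0. Then lim_{t→∞} (1/t) log ‖u(t)‖ = −(λ_{n₀} − Σ_{i=1}^N π_i (α_i − (1/2) Σ_{j=1}^m β_{ij}²)). In particular, ‖u(t)‖ converges exponentially to zero if and only if λ_{n₀} > Σ_{i=1}^N π_i (α_i − (1/2) Σ_{j=1}^m β_{ij}²). -/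

import Mathlib

open Filter MeasureTheory
open scoped BigOperators

/-- multi-noise version of the sample Lyapunov exponent: for
`u(t) = Σ_n exp(−λ_n t + ∫_0^t [α(r(s)) − (1/2)Σ_{j=1}^m β_j(r(s))²] ds + M(t)) c_n e_n`
with `M(t)/t → 0`, one has
`(1/t) log ‖u(t)‖ → −(λ_{n₀} − Σ_i π_i (α_i − (1/2)Σ_j β_{ij}²))`, and `‖u(t)‖` converges
exponentially to zero iff `λ_{n₀} > Σ_i π_i (α_i − (1/2)Σ_j β_{ij}²)`. -/
theorem sample_lyapunov_exponent_hybrid_multinoise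
    {H : Type*} [NormedAddCommGroup H] [InnerProductSpace ℝ H] [CompleteSpace H]
    (b : HilbertBasis ℕ ℝ H)
    (lam : ℕ → ℝ) (hlam : Monotone lam)
    (c : ℕ → ℝ) (hc : Summable (fun n => c n ^ 2)) (hc0 : c ≠ 0)
    (n₀ : ℕ) (hn₀ : c n₀ ≠ 0) (hn₀min : ∀ k, k < n₀ → c k = 0)
    {N m : ℕ} (r : ℝ → Fin N) (hr : Measurable r)
    (α : Fin N → ℝ) (β : Fin m → Fin N → ℝ)
    (pp : Fin N → ℝ) (hpp : ∀ i, 0 ≤ pp i) (hppsum : ∑ i, pp i = 1)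
    (hocc : ∀ i, Tendsto
      (fun t : ℝ => (1 / t) * ∫ s in (0:ℝ)..t, (if r s = i then (1:ℝ) else 0))
      atTop (nhds (pp i)))
    (M : ℝ → ℝ) (hM : Tendsto (fun t : ℝ => M t / t) atTop (nhds 0))
    (u : ℝ → H)
    (hu : ∀ t : ℝ, u t =
      ∑' n : ℕ, (Real.exp (-lam n * t +
        (∫ s in (0:ℝ)..t, (α (r s) - (1 / 2) * ∑ j, β j (r s) ^ 2)) + M t) * c n)
        • (b n : H)) :
    Tendsto (fun t : ℝ => (1 / t) * Real.log ‖u t‖) atTop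
        (nhds (-(lam n₀ - ∑ i, pp i * (α i - (1 / 2) * ∑ j, β j i ^ 2)))) ∧
    ((∃ γ > (0:ℝ), ∃ C : ℝ, ∀ᶠ t in atTop, ‖u t‖ ≤ C * Real.exp (-γ * t)) ↔
      ∑ i, pp i * (α i - (1 / 2) * ∑ j, β j i ^ 2) < lam n₀) := by
  classical
  set f : Fin N → ℝ := fun i => α i - (1 / 2) * ∑ j, β j i ^ 2 with hf
  set κ : ℝ := ∑ i, pp i * f i with hκ
  set P : ℝ → ℝ := fun t => (∫ s in (0:ℝ)..t, f (r s)) + M t with hPdef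
  set a : ℝ → ℕ → ℝ := fun t n => Real.exp (-lam n * t + P t) * c n with ha
  -- indicator integrability
  have hind : ∀ (i : Fin N) (t : ℝ),
      IntervalIntegrable (fun s => if r s = i then (1:ℝ) else 0) volume 0 t := by
    intro i t
    have hmeas : Measurable fun s => if r s = i then (1:ℝ) else 0 :=
      Measurable.ite (hr (measurableSet_singleton i)) measurable_const measurable_const
    rw [intervalIntegrable_iff]
    have : IsFiniteMeasure (volume.restrict (Set.uIoc 0 t)) := by
      rw [Set.uIoc]; infer_instance
    refine (integrable_const (1:ℝ)).mono' hmeas.aestronglyMeasurable ?_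
    filter_upwards with s
    split_ifs <;> simp
  have hfr : ∀ s : ℝ, f (r s) = ∑ i, f i * (if r s = i then (1:ℝ) else 0) := by
    intro s
    rw [Finset.sum_congr rfl (fun i _ => mul_ite (r s = i) (f i) 1 0)]
    simp [Finset.sum_ite_eq' Finset.univ (r s) f]
  have hIdecomp : ∀ t : ℝ, (∫ s in (0:ℝ)..t, f (r s))
      = ∑ i, f i * ∫ s in (0:ℝ)..t, (if r s = i then (1:ℝ) else 0) := by
    intro t
    rw [intervalIntegral.integral_congr (g := fun s => ∑ i, f i * (if r s = i then (1:ℝ) else 0))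
      (fun s _ => hfr s)]
    rw [intervalIntegral.integral_finset_sum (fun i _ => (hind i t).const_mul (f i))]
    exact Finset.sum_congr rfl fun i _ => intervalIntegral.integral_const_mul _ _
  -- limit of (1/t) * P t
  have hlin : ∀ d : ℝ, Tendsto (fun t : ℝ => (1 / t) * (d * t)) atTop (nhds d) := by
    intro d
    refine Tendsto.congr' ?_ (tendsto_const_nhds (α := ℝ) (f := atTop))
    filter_upwards [eventually_ge_atTop (1:ℝ)] with t ht
    have ht0 : t ≠ 0 := by linarith
    field_simp
  have hconst : ∀ d : ℝ, Tendsto (fun t : ℝ => (1 / t) * d) atTop (nhds 0) := by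
    intro d
    have := tendsto_inv_atTop_zero (𝕜 := ℝ)
    simpa [one_div] using this.mul_const d
  have hP : Tendsto (fun t : ℝ => (1 / t) * P t) atTop (nhds κ) := by
    have h1 : Tendsto (fun t : ℝ =>
        (∑ i, f i * ((1 / t) * ∫ s in (0:ℝ)..t, (if r s = i then (1:ℝ) else 0))) + M t / t)
        atTop (nhds (∑ i, f i * pp i + 0)) := by
      exact (tendsto_finset_sum _ (fun i _ => (hocc i).const_mul (f i))).add hM
    have h2 : (fun t : ℝ => (1 / t) * P t) = fun t =>
        (∑ i, f i * ((1 / t) * ∫ s in (0:ℝ)..t, (if r s = i then (1:ℝ) else 0))) + M t / t := by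
      funext t
      rw [hPdef]
      simp only
      rw [hIdecomp t, mul_add, Finset.mul_sum, one_div, inv_mul_eq_div]
      congr 1
      exact Finset.sum_congr rfl fun i _ => by ring
    rw [h2]
    convert h1 using 2
    rw [hκ, add_zero]
    exact Finset.sum_congr rfl fun i _ => mul_comm _ _
  -- coefficient identification
  have hexp : ∀ t n, Real.exp (-lam n * t +
      (∫ s in (0:ℝ)..t, (α (r s) - (1 / 2) * ∑ j, β j (r s) ^ 2)) + M t) * c n = a t n := by
    intro t n
    rw [ha]
    simp only
    rw [hPdef]
    simp only [add_assoc]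
    rfl
  -- summability of squares, for t ≥ 0
  have hsq : ∀ t n, a t n ^ 2 = Real.exp (-lam n * t + P t) ^ 2 * c n ^ 2 := by
    intro t n; rw [ha]; ring
  have hsum : ∀ t : ℝ, 0 ≤ t → Summable (fun n => a t n ^ 2) := by
    intro t ht
    refine Summable.of_nonneg_of_le (fun n => sq_nonneg _)
      (fun n => ?_) (hc.mul_left (Real.exp (-lam 0 * t + P t) ^ 2))
    rw [hsq]
    refine mul_le_mul_of_nonneg_right ?_ (sq_nonneg _)
    refine pow_le_pow_left₀ (Real.exp_pos _).le (Real.exp_le_exp.2 ?_) 2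
    have := mul_le_mul_of_nonneg_right (hlam (Nat.zero_le n)) ht
    linarith
  -- norm formula
  have hnorm : ∀ t : ℝ, 0 ≤ t → ‖u t‖ = Real.sqrt (∑' n, a t n ^ 2) := by
    intro t ht
    have hmem : Memℓp (fun n => a t n) 2 := by
      apply memℓp_gen
      convert hsum t ht using 2 with n
      rw [ENNReal.toReal_ofNat, Real.rpow_two, Real.norm_eq_abs, sq_abs]
    set F : lp (fun _ : ℕ => ℝ) 2 := ⟨fun n => a t n, hmem⟩ with hF
    have hhs : HasSum (fun n => a t n • (b n : H)) (b.repr.symm F) := by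
      have := b.hasSum_repr_symm F
      convert this using 2
    have hut : u t = b.repr.symm F := by
      rw [hu t, ← hhs.tsum_eq]
      exact tsum_congr fun n => by rw [hexp t n]
    have hFn : ∀ n, F n = a t n := fun n => rfl
    rw [hut, LinearIsometryEquiv.norm_map]
    rw [lp.norm_eq_tsum_rpow (by norm_num) F, Real.sqrt_eq_rpow]
    congr 1
    congr 1 with n
    rw [hFn, ENNReal.toReal_ofNat, Real.rpow_two, Real.norm_eq_abs, sq_abs]
  set K : ℝ := ∑' n, c n ^ 2 with hKdef
  have hK0 : 0 < K := by
    have h1 : c n₀ ^ 2 ≤ K := Summable.le_tsum hc n₀ (fun _ _ => sq_nonneg _)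
    have := pow_pos (abs_pos.2 hn₀) 2
    rw [← sq_abs] at h1
    linarith
  -- bounds
  have hlow : ∀ t : ℝ, 0 ≤ t → Real.exp (-lam n₀ * t + P t) * |c n₀| ≤ ‖u t‖ := by
    intro t ht
    rw [hnorm t ht]
    have h1 : a t n₀ ^ 2 ≤ ∑' n, a t n ^ 2 :=
      Summable.le_tsum (hsum t ht) n₀ (fun _ _ => sq_nonneg _)
    have h2 := Real.sqrt_le_sqrt h1
    rw [Real.sqrt_sq_eq_abs] at h2
    calc Real.exp (-lam n₀ * t + P t) * |c n₀| = |a t n₀| := by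
          rw [ha]; simp only; rw [abs_mul, abs_of_pos (Real.exp_pos _)]
      _ ≤ _ := h2
  have hupp : ∀ t : ℝ, 0 ≤ t → ‖u t‖ ≤ Real.exp (-lam n₀ * t + P t) * Real.sqrt K := by
    intro t ht
    rw [hnorm t ht]
    have h1 : (∑' n, a t n ^ 2) ≤ Real.exp (-lam n₀ * t + P t) ^ 2 * K := by
      rw [hKdef, ← tsum_mul_left]
      refine Summable.tsum_le_tsum (fun n => ?_) (hsum t ht)
        (hc.mul_left (Real.exp (-lam n₀ * t + P t) ^ 2))
      rw [hsq]
      rcases lt_or_ge n n₀ with h | h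
      · rw [hn₀min n h]; simp
      · refine mul_le_mul_of_nonneg_right ?_ (sq_nonneg _)
        refine pow_le_pow_left₀ (Real.exp_pos _).le (Real.exp_le_exp.2 ?_) 2
        have := mul_le_mul_of_nonneg_right (hlam h) ht
        linarith
    calc Real.sqrt (∑' n, a t n ^ 2) ≤ Real.sqrt (Real.exp (-lam n₀ * t + P t) ^ 2 * K) :=
          Real.sqrt_le_sqrt h1
      _ = Real.exp (-lam n₀ * t + P t) * Real.sqrt K := by
          rw [Real.sqrt_mul (sq_nonneg _), Real.sqrt_sq (Real.exp_pos _).le]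
  have hupos : ∀ t : ℝ, 0 ≤ t → 0 < ‖u t‖ := fun t ht =>
    lt_of_lt_of_le (mul_pos (Real.exp_pos _) (abs_pos.2 hn₀)) (hlow t ht)
  -- the limit
  have hκeq : κ = ∑ i, pp i * (α i - (1 / 2) * ∑ j, β j i ^ 2) := rfl
  have hLo : Tendsto (fun t : ℝ => (1 / t) * ((-lam n₀ * t + P t) + Real.log |c n₀|))
      atTop (nhds (-(lam n₀ - κ))) := by
    have := ((hlin (-lam n₀)).add hP).add (hconst (Real.log |c n₀|))
    have heq : (fun t : ℝ => (1 / t) * ((-lam n₀ * t + P t) + Real.log |c n₀|))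
        = fun t => ((1 / t) * (-lam n₀ * t) + (1 / t) * P t) + (1 / t) * Real.log |c n₀| := by
      funext t; ring
    rw [heq]
    convert this using 2
    ring
  have hHi : Tendsto (fun t : ℝ => (1 / t) * ((-lam n₀ * t + P t) + Real.log (Real.sqrt K)))
      atTop (nhds (-(lam n₀ - κ))) := by
    have := ((hlin (-lam n₀)).add hP).add (hconst (Real.log (Real.sqrt K)))
    have heq : (fun t : ℝ => (1 / t) * ((-lam n₀ * t + P t) + Real.log (Real.sqrt K)))
        = fun t => ((1 / t) * (-lam n₀ * t) + (1 / t) * P t) + (1 / t) * Real.log (Real.sqrt K) := by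
      funext t; ring
    rw [heq]
    convert this using 2
    ring
  have hmain : Tendsto (fun t : ℝ => (1 / t) * Real.log ‖u t‖) atTop
      (nhds (-(lam n₀ - κ))) := by
    refine tendsto_of_tendsto_of_tendsto_of_le_of_le' hLo hHi ?_ ?_
    · filter_upwards [eventually_ge_atTop (1:ℝ)] with t ht
      have ht0 : (0:ℝ) ≤ t := by linarith
      have h1 : Real.log (Real.exp (-lam n₀ * t + P t) * |c n₀|) ≤ Real.log ‖u t‖ :=
        Real.log_le_log (mul_pos (Real.exp_pos _) (abs_pos.2 hn₀)) (hlow t ht0)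
      rw [Real.log_mul (Real.exp_ne_zero _) (abs_ne_zero.2 hn₀), Real.log_exp] at h1
      exact mul_le_mul_of_nonneg_left h1 (by positivity)
    · filter_upwards [eventually_ge_atTop (1:ℝ)] with t ht
      have ht0 : (0:ℝ) ≤ t := by linarith
      have h1 : Real.log ‖u t‖ ≤ Real.log (Real.exp (-lam n₀ * t + P t) * Real.sqrt K) :=
        Real.log_le_log (hupos t ht0) (hupp t ht0)
      rw [Real.log_mul (Real.exp_ne_zero _) (by positivity), Real.log_exp] at h1
      exact mul_le_mul_of_nonneg_left h1 (by positivity)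
  refine ⟨hmain, ?_, ?_⟩
  · -- exponential bound ⇒ κ < lam n₀
    rintro ⟨γ, hγ, C, hev⟩
    have hle : -(lam n₀ - κ) ≤ -γ := by
      obtain ⟨t₀, hb, ht₀⟩ := (hev.and (eventually_ge_atTop (0:ℝ))).exists
      have hC : 0 < C := by
        have h1 := hupos t₀ ht₀
        nlinarith [Real.exp_pos (-γ * t₀), le_trans h1.le hb]
      have hg : Tendsto (fun t : ℝ => (1 / t) * (Real.log C + -γ * t)) atTop (nhds (-γ)) := by
        have := (hconst (Real.log C)).add (hlin (-γ))
        have heq : (fun t : ℝ => (1 / t) * (Real.log C + -γ * t))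
            = fun t => (1 / t) * Real.log C + (1 / t) * (-γ * t) := by funext t; ring
        rw [heq]
        convert this using 2
        ring
      refine le_of_tendsto_of_tendsto hmain hg ?_
      filter_upwards [hev, eventually_ge_atTop (1:ℝ)] with t hb1 ht
      have ht0 : (0:ℝ) ≤ t := by linarith
      have h1 : Real.log ‖u t‖ ≤ Real.log (C * Real.exp (-γ * t)) :=
        Real.log_le_log (hupos t ht0) hb1
      rw [Real.log_mul (ne_of_gt hC) (Real.exp_ne_zero _), Real.log_exp] at h1
      exact mul_le_mul_of_nonneg_left h1 (by positivity)
    linarith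
  · -- κ < lam n₀ ⇒ exponential bound
    intro hκlt
    set γ : ℝ := (lam n₀ - κ) / 2 with hγdef
    have hγ : 0 < γ := by rw [hγdef]; linarith
    refine ⟨γ, hγ, 1, ?_⟩
    have hevlt : ∀ᶠ t in atTop, (1 / t) * Real.log ‖u t‖ < -γ :=
      hmain.eventually_lt_const (by rw [hγdef]; linarith)
    filter_upwards [hevlt, eventually_ge_atTop (1:ℝ)] with t h1 ht
    have ht0 : (0:ℝ) < t := by linarith
    have h2 : Real.log ‖u t‖ < -γ * t := by
      have := mul_lt_mul_of_pos_right h1 ht0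
      rw [mul_comm, ← mul_assoc] at this
      rw [mul_one_div, div_self (ne_of_gt ht0), one_mul] at this
      linarith [this]
    have h3 : ‖u t‖ < Real.exp (-γ * t) := by
      have := Real.exp_lt_exp.2 h2
      rwa [Real.exp_log (hupos t ht0.le)] at this
    linarith [h3]
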